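/- Let α > 0 and suppose Σ_{i=1}^N min_{r∈{1,…,β}} |x_i − ν_r| ≤ α·φ_T. Then: (a) for every s ∈ {1,…,β} there exists r ∈ {1,…,β} with |ν_r − μ_s| ≤ 2(α + 1)·φ*/n_s; and (b) if moreover c > 0 and the separability condition |μ_t − μ_s| ≥ c·φ*·(1/n_s + 1/n_t) holds for all t ≠ s, then that same centroid satisfies |ν_r − μ_s| ≤ (2(α + 1)/c)·|μ_t − μ_s| for every t ≠ s (so the relative centroid error γ is at most 2(α + 1)/c). -/

import Mathlib

open Finset

/-- Lemma 9 of the paper: an `α`-approximation for the clustering cost yields,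
for cluster `s`, a centroid `ν_r` with `|ν_r − μ_s| ≤ 2(α+1)·φ*/n_s`; if in
addition the separability condition `|μ_t − μ_s| ≥ c·φ*·(1/n_s + 1/n_t)` holds
for all `t ≠ s`, then the same centroid satisfies
`|ν_r − μ_s| ≤ (2(α+1)/c)·|μ_t − μ_s|` for every `t ≠ s`. -/
theorem approx_centroid_error_bound
    (N β : ℕ) (hβ : 0 < β) (x : Fin N → ℝ) (μ ν : Fin β → ℝ)
    (T : Fin β → Finset (Fin N))
    (hTpart : ∀ i : Fin N, ∃! t : Fin β, i ∈ T t)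
    (hTne : ∀ t : Fin β, (T t).Nonempty)
    (α : ℝ) (hα : 0 < α)
    (hcost : ∑ i : Fin N,
        (Finset.univ.inf' ⟨⟨0, hβ⟩, Finset.mem_univ _⟩ (fun r => |x i - ν r|))
      ≤ α * ∑ t : Fin β, ∑ i ∈ T t, |x i - (∑ j ∈ T t, x j) / ((T t).card : ℝ)|)
    (s : Fin β) :
    ∃ r : Fin β,
      |ν r - μ s| ≤
        2 * (α + 1) * (∑ t : Fin β, ∑ i ∈ T t, |x i - μ t|) / ((T s).card : ℝ) ∧
      ∀ c : ℝ, 0 < c →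
        (∀ t : Fin β, t ≠ s →
          |μ t - μ s| ≥ c * (∑ u : Fin β, ∑ i ∈ T u, |x i - μ u|) *
            (1 / ((T s).card : ℝ) + 1 / ((T t).card : ℝ))) →
        ∀ t : Fin β, t ≠ s →
          |ν r - μ s| ≤ (2 * (α + 1) / c) * |μ t - μ s| := by
  classical
  set φ : ℝ := ∑ t : Fin β, ∑ i ∈ T t, |x i - μ t| with hφdef
  have hφ0 : 0 ≤ φ := by
    apply Finset.sum_nonneg; intro t _
    exact Finset.sum_nonneg fun i _ => abs_nonneg _
  have hcard : ∀ t : Fin β, (0:ℝ) < ((T t).card : ℝ) := by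
    intro t; exact_mod_cast Finset.card_pos.mpr (hTne t)
  -- φ_T ≤ 2 φ
  have hφT : (∑ t : Fin β, ∑ i ∈ T t, |x i - (∑ j ∈ T t, x j) / ((T t).card : ℝ)|)
      ≤ 2 * φ := by
    rw [hφdef, Finset.mul_sum]
    apply Finset.sum_le_sum
    intro t _
    have hn := hcard t
    set g : ℝ := (∑ j ∈ T t, x j) / ((T t).card : ℝ) with hg
    have hgμ : |g - μ t| ≤ (∑ j ∈ T t, |x j - μ t|) / ((T t).card : ℝ) := by
      have h1 : g - μ t = (∑ j ∈ T t, (x j - μ t)) / ((T t).card : ℝ) := by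
        rw [hg, Finset.sum_sub_distrib, Finset.sum_const, nsmul_eq_mul]
        field_simp
      rw [h1, abs_div, abs_of_pos hn]
      gcongr
      exact Finset.abs_sum_le_sum_abs _ _
    calc ∑ i ∈ T t, |x i - g|
        ≤ ∑ i ∈ T t, (|x i - μ t| + |g - μ t|) := by
          apply Finset.sum_le_sum; intro i _
          calc |x i - g| ≤ |x i - μ t| + |μ t - g| := abs_sub_le _ _ _
            _ = |x i - μ t| + |g - μ t| := by rw [abs_sub_comm (μ t) g]
      _ = (∑ i ∈ T t, |x i - μ t|) + ((T t).card : ℝ) * |g - μ t| := by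
          rw [Finset.sum_add_distrib, Finset.sum_const, nsmul_eq_mul]
      _ ≤ (∑ i ∈ T t, |x i - μ t|) +
          ((T t).card : ℝ) * ((∑ j ∈ T t, |x j - μ t|) / ((T t).card : ℝ)) := by
          gcongr
      _ = 2 * ∑ i ∈ T t, |x i - μ t| := by field_simp; ring
  -- choose r minimizing |ν r - μ s|
  obtain ⟨r, -, hrmin⟩ := Finset.exists_min_image (Finset.univ : Finset (Fin β))
    (fun r => |ν r - μ s|) ⟨⟨0, hβ⟩, Finset.mem_univ _⟩
  have key : ((T s).card : ℝ) * |ν r - μ s| ≤ 2 * (α + 1) * φ := by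
    have hpt : ∀ i ∈ T s, |ν r - μ s| ≤
        (Finset.univ.inf' ⟨⟨0, hβ⟩, Finset.mem_univ _⟩ (fun r' => |x i - ν r'|))
          + |x i - μ s| := by
      intro i _
      obtain ⟨ri, -, hri⟩ := Finset.exists_mem_eq_inf'
        (⟨⟨0, hβ⟩, Finset.mem_univ _⟩ : (Finset.univ : Finset (Fin β)).Nonempty)
        (fun r' => |x i - ν r'|)
      rw [hri]
      calc |ν r - μ s| ≤ |ν ri - μ s| := hrmin ri (Finset.mem_univ _)
        _ ≤ |ν ri - x i| + |x i - μ s| := abs_sub_le _ _ _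
        _ = |x i - ν ri| + |x i - μ s| := by rw [abs_sub_comm]
    have hsum : ((T s).card : ℝ) * |ν r - μ s|
        ≤ (∑ i ∈ T s, Finset.univ.inf' ⟨⟨0, hβ⟩, Finset.mem_univ _⟩
            (fun r' => |x i - ν r'|)) + ∑ i ∈ T s, |x i - μ s| := by
      have := Finset.sum_le_sum hpt
      simpa [Finset.sum_add_distrib, Finset.sum_const, nsmul_eq_mul, mul_comm] using this
    have h1 : (∑ i ∈ T s, Finset.univ.inf' ⟨⟨0, hβ⟩, Finset.mem_univ _⟩
          (fun r' => |x i - ν r'|))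
        ≤ ∑ i : Fin N, Finset.univ.inf' ⟨⟨0, hβ⟩, Finset.mem_univ _⟩
          (fun r' => |x i - ν r'|) := by
      apply Finset.sum_le_sum_of_subset_of_nonneg (Finset.subset_univ _)
      intro i _ _
      exact Finset.le_inf' _ _ fun r' _ => abs_nonneg _
    have h2 : ∑ i ∈ T s, |x i - μ s| ≤ φ := by
      rw [hφdef]
      exact Finset.single_le_sum
        (f := fun t => ∑ i ∈ T t, |x i - μ t|)
        (fun t _ => Finset.sum_nonneg fun i _ => abs_nonneg _) (Finset.mem_univ s)
    calc ((T s).card : ℝ) * |ν r - μ s|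
        ≤ (∑ i : Fin N, Finset.univ.inf' ⟨⟨0, hβ⟩, Finset.mem_univ _⟩
            (fun r' => |x i - ν r'|)) + φ := by
          refine hsum.trans (add_le_add h1 h2)
      _ ≤ α * (2 * φ) + φ := by
          refine add_le_add_left (hcost.trans ?_) φ
          nlinarith
      _ ≤ 2 * (α + 1) * φ := by nlinarith
  have ha : |ν r - μ s| ≤ 2 * (α + 1) * φ / ((T s).card : ℝ) := by
    rw [le_div_iff₀ (hcard s)]
    linarith [key]
  refine ⟨r, ha, ?_⟩
  intro c hc hsep t hts
  have hsep' := hsep t hts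
  have hfrac : c * φ / ((T s).card : ℝ) ≤ |μ t - μ s| := by
    have h1 : c * φ * (1 / ((T s).card : ℝ)) ≤
        c * φ * (1 / ((T s).card : ℝ) + 1 / ((T t).card : ℝ)) := by
      have : (0:ℝ) ≤ 1 / ((T t).card : ℝ) := by positivity
      nlinarith [mul_nonneg hc.le hφ0]
    calc c * φ / ((T s).card : ℝ) = c * φ * (1 / ((T s).card : ℝ)) := by ring
      _ ≤ c * φ * (1 / ((T s).card : ℝ) + 1 / ((T t).card : ℝ)) := h1
      _ ≤ |μ t - μ s| := hsep'
  calc |ν r - μ s| ≤ 2 * (α + 1) * φ / ((T s).card : ℝ) := ha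
    _ ≤ (2 * (α + 1) / c) * |μ t - μ s| := by
        rw [div_mul_eq_mul_div, le_div_iff₀ hc, div_mul_eq_mul_div,
          div_le_iff₀ (hcard s)]
        have h2 : (0:ℝ) ≤ 2 * (α + 1) := by linarith
        calc 2 * (α + 1) * φ * c = (2 * (α + 1)) * (c * φ / ((T s).card : ℝ)) * ((T s).card : ℝ) := by
              field_simp
          _ ≤ (2 * (α + 1)) * |μ t - μ s| * ((T s).card : ℝ) := by
              gcongr
          _ = 2 * (α + 1) * |μ t - μ s| * ((T s).card : ℝ) := by ring
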